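/- Let S = ℚ[x, y, z] and let M′ ⊆ S^4 be the submodule of tuples (g_0, g_1, g_2, g_3) satisfying: (x + y − z) divides g_0 − g_1, (3x − y + z) divides g_0 − g_2, (x − y − z) divides g_0 − g_3, x divides g_1 − g_2, (4x − 5y − 6z) divides g_2 − g_3, and y divides g_1 − g_3. Then there exists K such that for all k ≥ K, the ℚ-vector space of elements of M′ all of whose components are homogeneous of degree k has dimension exactly 2k² + 1; i.e., the Hilbert polynomial of M′ is 2k² + 1. In particular M′ is not isomorphic to the spline module of the combinatorially equivalent fan with concurrent connecting lines, whose Hilbert polynomial is 2k² + 2: the Hilbert polynomial of C^0(Σ) depends on the geometry, not just the combinatorics, of the fan Σ. -/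

import Mathlib

open MvPolynomial

/-- The ring `S = ℚ[x, y, z]`. -/
abbrev S : Type := MvPolynomial (Fin 3) ℚ


-- homogeneity division lemma
lemma isHomogeneous_of_mul_left {l a : S} {m n : ℕ} (hl : l.IsHomogeneous m) (hl0 : l ≠ 0)
    (h : (l * a).IsHomogeneous (m + n)) : a.IsHomogeneous n := by
  have key : ∀ j, j ≠ n → homogeneousComponent j a = 0 := by
    intro j hj
    by_cases hjle : j ≤ a.totalDegree
    · have h2 : homogeneousComponent (m + j) (l * a) = l * homogeneousComponent j a := by
        calc homogeneousComponent (m + j) (l * a)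
            = homogeneousComponent (m + j)
              (∑ i ∈ Finset.range (a.totalDegree + 1), l * homogeneousComponent i a) := by
                rw [← Finset.mul_sum, sum_homogeneousComponent]
          _ = ∑ i ∈ Finset.range (a.totalDegree + 1),
              homogeneousComponent (m + j) (l * homogeneousComponent i a) := map_sum _ _ _
          _ = ∑ i ∈ Finset.range (a.totalDegree + 1),
              if i = j then l * homogeneousComponent j a else 0 := by
                refine Finset.sum_congr rfl fun i _ => ?_
                rw [homogeneousComponent_of_mem ((mem_homogeneousSubmodule _ _).mpr
                  (hl.mul (homogeneousComponent_isHomogeneous i a)))]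
                by_cases hij : i = j
                · subst hij; simp
                · rw [if_neg (by omega), if_neg hij]
          _ = l * homogeneousComponent j a := by
                rw [Finset.sum_ite_eq' (Finset.range _) j, if_pos (Finset.mem_range.mpr (by omega))]
      have h1 : homogeneousComponent (m + j) (l * a) = 0 := by
        rw [homogeneousComponent_of_mem ((mem_homogeneousSubmodule _ _).mpr h),
          if_neg (by omega)]
      have := h2.symm.trans h1
      rcases mul_eq_zero.mp this with h' | h'
      · exact absurd h' hl0
      · exact h'
    · exact homogeneousComponent_eq_zero _ a (by omega)
  have ha : a = homogeneousComponent n a := by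
    conv_lhs => rw [← sum_homogeneousComponent a]
    by_cases hn : n < a.totalDegree + 1
    · exact Finset.sum_eq_single_of_mem n (Finset.mem_range.mpr hn) fun i _ hi => key i hi
    · have h0 : (homogeneousComponent n) a = 0 := homogeneousComponent_eq_zero n a (by omega)
      rw [Finset.sum_eq_zero fun i hi => key i (by simp at hi; omega), h0]
  exact ha ▸ homogeneousComponent_isHomogeneous n a

-- finrank of homogeneous pieces
noncomputable def Wspace (n : ℕ) := homogeneousSubmodule (Fin 3) ℚ n

noncomputable def degreeEquivSym (n : ℕ) : {d : Fin 3 →₀ ℕ // d.degree = n} ≃ Sym (Fin 3) n :=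
  Equiv.subtypeEquiv (Multiset.toFinsupp (α := Fin 3)).symm.toEquiv (fun d => by
    show d.degree = n ↔ Multiset.card (Multiset.toFinsupp.symm d) = n
    rw [show (Multiset.toFinsupp.symm d : Multiset (Fin 3)) = Finsupp.toMultiset d from rfl,
      Finsupp.card_toMultiset]
    rfl)

noncomputable instance degFintype (n : ℕ) : Fintype {d : Fin 3 →₀ ℕ // d.degree = n} :=
  Fintype.ofEquiv _ (degreeEquivSym n).symm

noncomputable def WequivFinsupp (n : ℕ) :
    Wspace n ≃ₗ[ℚ] ({d : Fin 3 →₀ ℕ // d.degree = n} →₀ ℚ) :=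
  (LinearEquiv.ofEq _ _ (homogeneousSubmodule_eq_finsupp_supported (Fin 3) ℚ n)).trans
    (AddMonoidAlgebra.supportedEquivFinsupp _)

instance Wfd (n : ℕ) : FiniteDimensional ℚ (Wspace n) :=
  Module.Finite.equiv (WequivFinsupp n).symm

instance Wfree (n : ℕ) : Module.Free ℚ (Wspace n) := Module.Free.of_divisionRing ℚ _

lemma finrank_W (n : ℕ) : Module.finrank ℚ (Wspace n) = (n + 2).choose 2 := by
  rw [(WequivFinsupp n).finrank_eq, Module.finrank_finsupp,
    Module.finrank_self, mul_one, Fintype.card_congr (degreeEquivSym n),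
    Sym.card_sym_eq_choose]
  show (3 + n - 1).choose n = (n+2).choose 2
  rw [show 3 + n - 1 = n + 2 by omega, ← Nat.choose_symm (by omega : 2 ≤ n + 2),
    Nat.add_sub_cancel]

/-- The Billera–Rose submodule of `S^N` cut out by a list of conditions
`(ℓ, a, b)`, each requiring `ℓ ∣ g_a - g_b`. -/
noncomputable def splineBR {N : ℕ} (conds : List (S × Fin N × Fin N)) :
    Submodule S (Fin N → S) where
  carrier := {g | ∀ c ∈ conds, c.1 ∣ g c.2.1 - g c.2.2}
  add_mem' := by
    intro a b ha hb c hc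
    simpa [sub_add_sub_comm] using dvd_add (ha c hc) (hb c hc)
  zero_mem' := by
    intro c hc
    simp
  smul_mem' := by
    intro r g hg c hc
    simpa [smul_eq_mul, mul_sub] using (hg c hc).mul_left r

/-- The spline module `M′ = C^0(Σ′) ⊆ S^4` of the cone `Σ′` over the perturbed
(generic) triangle-in-triangle complex: tuples `(g_0, g_1, g_2, g_3)` with
`x+y-z ∣ g_0-g_1`, `3x-y+z ∣ g_0-g_2`, `x-y-z ∣ g_0-g_3`, `x ∣ g_1-g_2`,
`4x-5y-6z ∣ g_2-g_3`, `y ∣ g_1-g_3`. -/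
noncomputable def M' : Submodule S (Fin 4 → S) :=
  splineBR [(X 0 + X 1 - X 2, 0, 1), (3 * X 0 - X 1 + X 2, 0, 2),
    (X 0 - X 1 - X 2, 0, 3), (X 0, 1, 2), (4 * X 0 - 5 * X 1 - 6 * X 2, 2, 3), (X 1, 1, 3)]



lemma prime_X0 : Prime (X 0 : S) := by
  have := (MulEquiv.prime_iff (MvPolynomial.finSuccEquiv ℚ 2).toMulEquiv (p := (X 0 : S))).symm
  rw [this]
  simpa [MvPolynomial.finSuccEquiv_X_zero] using (Polynomial.prime_X (R := MvPolynomial (Fin 2) ℚ))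

lemma prime_X1 : Prime (X 1 : S) := by
  have h := (MulEquiv.prime_iff (MvPolynomial.renameEquiv ℚ (Equiv.swap (0 : Fin 3) 1)).toMulEquiv
    (p := (X 0 : S))).symm
  have := h.mp prime_X0
  rwa [show (MvPolynomial.renameEquiv ℚ (Equiv.swap (0 : Fin 3) 1)).toMulEquiv (X 0) = (X 1 : S)
    from by simp [renameEquiv_apply, rename_X]] at this

lemma prime_linear (c0 c1 c2 : ℚ) (h0 : c0 ≠ 0) :
    Prime (C c0 * X 0 + C c1 * X 1 + C c2 * X 2 : S) := by
  have hC : (C c0⁻¹ : S) * C c0 = 1 := by rw [← C_mul, inv_mul_cancel₀ h0, C_1]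
  let f : S →ₐ[ℚ] S := aeval ![C c0 * X 0 + C c1 * X 1 + C c2 * X 2, X 1, X 2]
  let g : S →ₐ[ℚ] S := aeval ![C c0⁻¹ * (X 0 - C c1 * X 1 - C c2 * X 2), X 1, X 2]
  have hfg : f.comp g = AlgHom.id ℚ S := by
    apply MvPolynomial.algHom_ext
    intro i
    fin_cases i <;> simp [f, g, map_sub, map_mul, aeval_X]
    linear_combination (X 0 : S) * hC
  have hgf : g.comp f = AlgHom.id ℚ S := by
    apply MvPolynomial.algHom_ext
    intro i
    fin_cases i <;> simp [f, g, map_sub, map_mul, aeval_X]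
    linear_combination ((X 0 : S) - C c1 * X 1 - C c2 * X 2) * hC
  let e : S ≃ₐ[ℚ] S := AlgEquiv.ofAlgHom f g hfg hgf
  have h := (MulEquiv.prime_iff e.toMulEquiv (p := (X 0 : S))).symm
  have hprime := h.mp prime_X0
  rwa [show e.toMulEquiv (X 0) = C c0 * X 0 + C c1 * X 1 + C c2 * X 2 from by
    simp [e, AlgEquiv.ofAlgHom, f, aeval_X]] at hprime


lemma mem_splineBR {N : ℕ} (conds : List (S × Fin N × Fin N)) (g : Fin N → S) :
    g ∈ splineBR conds ↔ ∀ c ∈ conds, c.1 ∣ g c.2.1 - g c.2.2 := Iff.rfl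

noncomputable def l1 : S := X 0 + X 1 - X 2
noncomputable def l2 : S := 3 * X 0 - X 1 + X 2
noncomputable def l3 : S := X 0 - X 1 - X 2
noncomputable def lL : S := 4 * X 0 - 5 * X 1 - 6 * X 2

lemma mem_M'_iff (g : Fin 4 → S) :
    g ∈ M' ↔ (l1 ∣ g 0 - g 1) ∧ (l2 ∣ g 0 - g 2) ∧ (l3 ∣ g 0 - g 3) ∧
      (X 0 ∣ g 1 - g 2) ∧ (lL ∣ g 2 - g 3) ∧ (X 1 ∣ g 1 - g 3) := by
  rw [M', mem_splineBR]
  constructor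
  · intro h
    exact ⟨h (X 0 + X 1 - X 2, 0, 1) (by simp), h (3 * X 0 - X 1 + X 2, 0, 2) (by simp),
      h (X 0 - X 1 - X 2, 0, 3) (by simp), h (X 0, 1, 2) (by simp),
      h (4 * X 0 - 5 * X 1 - 6 * X 2, 2, 3) (by simp), h (X 1, 1, 3) (by simp)⟩
  · rintro ⟨h1, h2, h3, h4, h5, h6⟩ c hc
    simp only [List.mem_cons, List.not_mem_nil, or_false] at hc
    rcases hc with rfl | rfl | rfl | rfl | rfl | rfl
    exacts [h1, h2, h3, h4, h5, h6]

-- helpers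
lemma ne_zero_of_eval {p : S} (v : Fin 3 → ℚ) (h : eval v p ≠ 0) : p ≠ 0 :=
  fun h0 => h (by simp [h0])

lemma not_dvd_of_eval {l p : S} (v : Fin 3 → ℚ) (hl : eval v l = 0) (hp : eval v p ≠ 0) :
    ¬ l ∣ p := by
  rintro ⟨t, rfl⟩
  rw [map_mul, hl, zero_mul] at hp
  exact hp rfl

lemma l1_ne : l1 ≠ 0 := ne_zero_of_eval ![1, 0, 0] (by simp [l1])
lemma l2_ne : l2 ≠ 0 := ne_zero_of_eval ![1, 0, 0] (by simp [l2])
lemma l3_ne : l3 ≠ 0 := ne_zero_of_eval ![1, 0, 0] (by simp [l3])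
lemma lL_ne : lL ≠ 0 := ne_zero_of_eval ![1, 0, 0] (by simp [lL])
lemma X0_ne : (X 0 : S) ≠ 0 := ne_zero_of_eval ![1, 0, 0] (by simp)
lemma X1_ne : (X 1 : S) ≠ 0 := ne_zero_of_eval ![0, 1, 0] (by simp)
lemma twelve_ne : (12 : S) ≠ 0 := ne_zero_of_eval ![0, 0, 0] (by norm_num)

lemma nd1 : ¬ (X 0 : S) ∣ (X 1 - X 2) := not_dvd_of_eval ![0, 1, 0] (by simp) (by simp)
lemma nd2 : ¬ (X 1 : S) ∣ (X 0 - X 2) := not_dvd_of_eval ![1, 0, 0] (by simp) (by simp)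
lemma nd3 : ¬ lL ∣ (X 1 + 2 * X 2) := not_dvd_of_eval ![3, 0, 2] (by simp [lL]; norm_num)
  (by simp)

lemma hlin (a b c : ℚ) : ((C a) * X 0 + (C b) * X 1 + (C c) * X 2 : S).IsHomogeneous 1 :=
  (((isHomogeneous_X ℚ 0).C_mul a).add ((isHomogeneous_X ℚ 1).C_mul b)).add
    ((isHomogeneous_X ℚ 2).C_mul c)

lemma hl1 : l1.IsHomogeneous 1 := by
  have h := hlin 1 1 (-1)
  have e : (C (1:ℚ)) * X 0 + (C (1:ℚ)) * X 1 + (C (-1:ℚ)) * X 2 = l1 := by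
    simp only [map_one, map_neg, map_ofNat]; unfold l1; ring
  rwa [e] at h

lemma hl2 : l2.IsHomogeneous 1 := by
  have h := hlin 3 (-1) 1
  have e : (C (3:ℚ)) * X 0 + (C (-1:ℚ)) * X 1 + (C (1:ℚ)) * X 2 = l2 := by
    simp only [map_one, map_neg, map_ofNat]; unfold l2; ring
  rwa [e] at h

lemma hl3 : l3.IsHomogeneous 1 := by
  have h := hlin 1 (-1) (-1)
  have e : (C (1:ℚ)) * X 0 + (C (-1:ℚ)) * X 1 + (C (-1:ℚ)) * X 2 = l3 := by
    simp only [map_one, map_neg, map_ofNat]; unfold l3; ring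
  rwa [e] at h

lemma hlL : lL.IsHomogeneous 1 := by
  have h := hlin 4 (-5) (-6)
  have e : (C (4:ℚ)) * X 0 + (C (-5:ℚ)) * X 1 + (C (-6:ℚ)) * X 2 = lL := by
    simp only [map_neg, map_ofNat]; unfold lL; ring
  rwa [e] at h

lemma prime_lL' : Prime lL := by
  have h := prime_linear 4 (-5) (-6) (by norm_num)
  have e : (C (4:ℚ)) * X 0 + (C (-5:ℚ)) * X 1 + (C (-6:ℚ)) * X 2 = lL := by
    simp only [map_neg, map_ofNat]; unfold lL; ring
  rwa [e] at h

lemma homog_nat_mul {p : S} {k : ℕ} (n : ℕ) (hp : p.IsHomogeneous k) :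
    ((n : S) * p).IsHomogeneous k := by
  have e : ((n : S)) * p = C ((n : ℚ)) * p := by rw [map_natCast]
  exact e ▸ hp.C_mul _

lemma homog_cast {p : S} {m n : ℕ} (h : p.IsHomogeneous m) (e : m = n) : p.IsHomogeneous n :=
  e ▸ h

noncomputable def Apoly (q r s : S) : S := 11 * (X 0 * q) + X 1 * r - lL * s
noncomputable def Bpoly (q r s : S) : S := X 0 * q - X 1 * r + lL * s
noncomputable def Cpoly (q r s : S) : S := 11 * (X 0 * q) - 11 * (X 1 * r) - lL * s

noncomputable def psi (p q r s : S) : Fin 4 → S :=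
  ![12 * p, 12 * p + l1 * Apoly q r s, 12 * p + l2 * Bpoly q r s, 12 * p + l3 * Cpoly q r s]

lemma psi_zero : psi 0 0 0 0 = 0 := by
  funext i; fin_cases i <;> simp [psi, Apoly, Bpoly, Cpoly]

lemma psi_mem_M' (p q r s : S) : psi p q r s ∈ M' := by
  rw [mem_M'_iff]
  refine ⟨⟨-Apoly q r s, ?_⟩, ⟨-Bpoly q r s, ?_⟩, ⟨-Cpoly q r s, ?_⟩,
    ⟨q * (8 * X 0 + 12 * X 1 - 12 * X 2) + 4 * (X 1 * r) - 4 * (lL * s), ?_⟩,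
    ⟨-2 * (X 0 * q) + 2 * (X 1 * r) + (4 * X 0 - 2 * X 1) * s, ?_⟩,
    ⟨22 * (X 0 * q) + (12 * X 0 - 10 * X 1 - 12 * X 2) * r - 2 * (lL * s), ?_⟩⟩ <;>
  · simp only [psi, Apoly, Bpoly, Cpoly, l1, l2, l3, lL, Matrix.cons_val_zero,
      Matrix.cons_val_one, Matrix.head_cons, Matrix.cons_val_two, Matrix.cons_val_three,
      Matrix.tail_cons]
    ring

lemma psi_eq_zero {p q r s : S} (h : psi p q r s = 0) : p = 0 ∧ q = 0 ∧ r = 0 ∧ s = 0 := by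
  have e0 : (12 : S) * p = 0 := by simpa [psi] using congrFun h 0
  have hp : p = 0 := by
    rcases mul_eq_zero.mp e0 with h' | h'
    · exact absurd h' twelve_ne
    · exact h'
  have e1 : l1 * Apoly q r s = 0 := by
    have := congrFun h 1; simp [psi, hp] at this; simpa using this
  have e2 : l2 * Bpoly q r s = 0 := by
    have := congrFun h 2; simp [psi, hp] at this; simpa using this
  have e3 : l3 * Cpoly q r s = 0 := by
    have := congrFun h 3; simp [psi, hp] at this; simpa using this
  have hA : Apoly q r s = 0 := by
    rcases mul_eq_zero.mp e1 with h' | h'; exacts [absurd h' l1_ne, h']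
  have hB : Bpoly q r s = 0 := by
    rcases mul_eq_zero.mp e2 with h' | h'; exacts [absurd h' l2_ne, h']
  have hC : Cpoly q r s = 0 := by
    rcases mul_eq_zero.mp e3 with h' | h'; exacts [absurd h' l3_ne, h']
  simp only [Apoly, Bpoly, Cpoly, lL] at hA hB hC
  have hq0 : (12 : S) * (X 0 * q) = 0 := by linear_combination hA + hB
  have hr0 : (12 : S) * (X 1 * r) = 0 := by linear_combination hA - hC
  have hs0 : (12 : S) * ((4 * X 0 - 5 * X 1 - 6 * X 2) * s) = 0 := by
    linear_combination 11 * hB - hC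
  have hlLne : (4 * X 0 - 5 * X 1 - 6 * X 2 : S) ≠ 0 := lL_ne
  refine ⟨hp, ?_, ?_, ?_⟩
  · rcases mul_eq_zero.mp hq0 with h' | h'
    · exact absurd h' twelve_ne
    · rcases mul_eq_zero.mp h' with h'' | h''
      exacts [absurd h'' X0_ne, h'']
  · rcases mul_eq_zero.mp hr0 with h' | h'
    · exact absurd h' twelve_ne
    · rcases mul_eq_zero.mp h' with h'' | h''
      exacts [absurd h'' X1_ne, h'']
  · rcases mul_eq_zero.mp hs0 with h' | h'
    · exact absurd h' twelve_ne
    · rcases mul_eq_zero.mp h' with h'' | h''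
      exacts [absurd h'' hlLne, h'']

lemma psi_homog {k : ℕ} (hk : 2 ≤ k) {p q r s : S} (hp : p.IsHomogeneous k)
    (hq : q.IsHomogeneous (k - 2)) (hr : r.IsHomogeneous (k - 2))
    (hs : s.IsHomogeneous (k - 2)) : ∀ i, (psi p q r s i).IsHomogeneous k := by
  have hXq : ((11 : ℕ) : S) * (X 0 * q) |>.IsHomogeneous (1 + (k - 2)) :=
    homog_nat_mul 11 ((isHomogeneous_X ℚ 0).mul hq)
  have hXq1 : (X 0 * q : S).IsHomogeneous (1 + (k - 2)) := (isHomogeneous_X ℚ 0).mul hq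
  have hXr : (X 1 * r : S).IsHomogeneous (1 + (k - 2)) := (isHomogeneous_X ℚ 1).mul hr
  have hLs : (lL * s).IsHomogeneous (1 + (k - 2)) := hlL.mul hs
  have hA : (Apoly q r s).IsHomogeneous (k - 1) := by
    have e : Apoly q r s = ((11 : ℕ) : S) * (X 0 * q) + X 1 * r - lL * s := by
      push_cast; simp only [Apoly]
    rw [e, show k - 1 = 1 + (k - 2) by omega]
    exact (hXq.add hXr).sub hLs
  have hB : (Bpoly q r s).IsHomogeneous (k - 1) := by
    rw [show k - 1 = 1 + (k - 2) by omega]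
    exact (hXq1.sub hXr).add hLs
  have hC : (Cpoly q r s).IsHomogeneous (k - 1) := by
    have e : Cpoly q r s = ((11 : ℕ) : S) * (X 0 * q) - ((11 : ℕ) : S) * (X 1 * r) - lL * s := by
      push_cast; simp only [Cpoly]
    rw [e, show k - 1 = 1 + (k - 2) by omega]
    exact (hXq.sub (homog_nat_mul 11 hXr)).sub hLs
  have h12p : ((12 : S) * p).IsHomogeneous k := by
    rw [show (12 : S) * p = ((12 : ℕ) : S) * p by norm_num]
    exact homog_nat_mul 12 hp
  intro i
  fin_cases i <;> simp only [psi, Matrix.cons_val_zero, Matrix.cons_val_one, Matrix.head_cons,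
    Matrix.cons_val_two, Matrix.cons_val_three, Matrix.tail_cons]
  · exact h12p
  · exact h12p.add (homog_cast (hl1.mul hA) (by omega))
  · exact h12p.add (homog_cast (hl2.mul hB) (by omega))
  · exact h12p.add (homog_cast (hl3.mul hC) (by omega))

lemma psi_param {k : ℕ} (hk : 2 ≤ k) (g : Fin 4 → S) (hg : g ∈ M')
    (hhom : ∀ i, (g i).IsHomogeneous k) :
    ∃ p q r s : S, p.IsHomogeneous k ∧ q.IsHomogeneous (k - 2) ∧ r.IsHomogeneous (k - 2) ∧
      s.IsHomogeneous (k - 2) ∧ psi p q r s = g := by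
  rw [mem_M'_iff] at hg
  obtain ⟨h1, h2, h3, h4, h5, h6⟩ := hg
  obtain ⟨a', ha'⟩ := h1
  obtain ⟨b', hb'⟩ := h2
  obtain ⟨c', hc'⟩ := h3
  set a : S := -a' with ha_def
  set b : S := -b' with hb_def
  set c : S := -c' with hc_def
  have ha : g 1 - g 0 = l1 * a := by rw [ha_def]; linear_combination -ha'
  have hb : g 2 - g 0 = l2 * b := by rw [hb_def]; linear_combination -hb'
  have hc : g 3 - g 0 = l3 * c := by rw [hc_def]; linear_combination -hc'
  have hah : a.IsHomogeneous (k - 1) := by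
    refine isHomogeneous_of_mul_left hl1 l1_ne (n := k - 1) ?_
    rw [← ha]
    exact homog_cast ((hhom 1).sub (hhom 0)) (by omega)
  have hbh : b.IsHomogeneous (k - 1) := by
    refine isHomogeneous_of_mul_left hl2 l2_ne (n := k - 1) ?_
    rw [← hb]
    exact homog_cast ((hhom 2).sub (hhom 0)) (by omega)
  have hch : c.IsHomogeneous (k - 1) := by
    refine isHomogeneous_of_mul_left hl3 l3_ne (n := k - 1) ?_
    rw [← hc]
    exact homog_cast ((hhom 3).sub (hhom 0)) (by omega)
  simp only [l1, l2, l3, lL] at ha hb hc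
  -- divisibility by X 0
  have hx : X 0 ∣ (X 1 - X 2) * (a + b) := by
    have e : (X 1 - X 2) * (a + b) = (g 1 - g 2) - X 0 * (a - 3 * b) := by
      linear_combination hb - ha
    rw [e]
    exact dvd_sub h4 (Dvd.intro _ rfl)
  obtain ⟨q, hq⟩ := (prime_X0.2.2 _ _ hx).resolve_left nd1
  have hqh : q.IsHomogeneous (k - 2) := by
    refine isHomogeneous_of_mul_left (isHomogeneous_X ℚ 0) X0_ne (n := k - 2) ?_
    rw [← hq]
    exact homog_cast (hah.add hbh) (by omega)
  -- divisibility by X 1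
  have hy : X 1 ∣ (X 0 - X 2) * (a - c) := by
    have e : (X 0 - X 2) * (a - c) = (g 1 - g 3) - X 1 * (a + c) := by
      linear_combination hc - ha
    rw [e]
    exact dvd_sub h6 (Dvd.intro _ rfl)
  obtain ⟨r, hr⟩ := (prime_X1.2.2 _ _ hy).resolve_left nd2
  have hrh : r.IsHomogeneous (k - 2) := by
    refine isHomogeneous_of_mul_left (isHomogeneous_X ℚ 1) X1_ne (n := k - 2) ?_
    rw [← hr]
    exact homog_cast (hah.sub hch) (by omega)
  -- divisibility by lL
  have hz : lL ∣ (X 1 + 2 * X 2) * (11 * b - c) := by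
    have e : (X 1 + 2 * X 2) * (11 * b - c) = 4 * (g 2 - g 3) - lL * (3 * b - c) := by
      simp only [lL]; linear_combination -4 * hb + 4 * hc
    rw [e]
    exact dvd_sub (h5.mul_left 4) (Dvd.intro _ rfl)
  obtain ⟨s, hs⟩ := (prime_lL'.2.2 _ _ hz).resolve_left nd3
  have hsh : s.IsHomogeneous (k - 2) := by
    refine isHomogeneous_of_mul_left hlL lL_ne (n := k - 2) ?_
    rw [← hs]
    have e : (11 : S) * b - c = ((11 : ℕ) : S) * b - c := by norm_num
    rw [e, show 1 + (k - 2) = k - 1 by omega]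
    exact (homog_nat_mul 11 hbh).sub hch
  -- assemble
  have h12 : (12 : S) * C (12⁻¹ : ℚ) = 1 := by
    rw [show (12 : S) = C (12 : ℚ) from (map_ofNat C 12).symm, ← map_mul]
    norm_num
  refine ⟨C (12⁻¹ : ℚ) * g 0, C (12⁻¹ : ℚ) * q, C (12⁻¹ : ℚ) * r, C (12⁻¹ : ℚ) * s,
    (hhom 0).C_mul _, hqh.C_mul _, hrh.C_mul _, hsh.C_mul _, ?_⟩
  simp only [lL] at hs
  have key : ∀ v w : Fin 4 → S, v 0 = w 0 → v 1 = w 1 → v 2 = w 2 → v 3 = w 3 → v = w := by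
    intro v w k0 k1 k2 k3
    funext i
    fin_cases i
    exacts [k0, k1, k2, k3]
  refine key _ _ ?_ ?_ ?_ ?_ <;>
    simp only [psi, Apoly, Bpoly, Cpoly, l1, l2, l3, lL, Matrix.cons_val_zero,
      Matrix.cons_val_one, Matrix.head_cons, Matrix.cons_val_two, Matrix.cons_val_three,
      Matrix.tail_cons]
  · linear_combination g 0 * h12
  · linear_combination g 1 * h12 - 12 * C (12⁻¹ : ℚ) * ha -
      C (12⁻¹ : ℚ) * (X 0 + X 1 - X 2) * (11 * hq + hr - hs)
  · linear_combination g 2 * h12 - 12 * C (12⁻¹ : ℚ) * hb -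
      C (12⁻¹ : ℚ) * (3 * X 0 - X 1 + X 2) * (hq - hr + hs)
  · linear_combination g 3 * h12 - 12 * C (12⁻¹ : ℚ) * hc -
      C (12⁻¹ : ℚ) * (X 0 - X 1 - X 2) * (11 * hq - 11 * hr - hs)

/-- The `ℚ`-vector space of elements of a submodule `P ⊆ S^4` all of whose components
are homogeneous of degree `k` (or zero). -/
noncomputable def homPart (P : Submodule S (Fin 4 → S)) (k : ℕ) :
    Submodule ℚ (Fin 4 → S) :=
  (Submodule.restrictScalars ℚ P) ⊓
    Submodule.pi Set.univ (fun _ : Fin 4 => homogeneousSubmodule (Fin 3) ℚ k)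

lemma funext4 (v w : Fin 4 → S) (h0 : v 0 = w 0) (h1 : v 1 = w 1) (h2 : v 2 = w 2)
    (h3 : v 3 = w 3) : v = w := by
  funext i
  fin_cases i
  exacts [h0, h1, h2, h3]

lemma psi_add (p q r s p' q' r' s' : S) :
    psi (p + p') (q + q') (r + r') (s + s') = psi p q r s + psi p' q' r' s' := by
  refine funext4 _ _ ?_ ?_ ?_ ?_ <;>
    (simp only [psi, Apoly, Bpoly, Cpoly, Pi.add_apply, Matrix.cons_val_zero,
      Matrix.cons_val_one, Matrix.head_cons, Matrix.cons_val_two, Matrix.cons_val_three,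
      Matrix.tail_cons]; ring)

lemma psi_smul (c : ℚ) (p q r s : S) :
    psi (c • p) (c • q) (c • r) (c • s) = c • psi p q r s := by
  refine funext4 _ _ ?_ ?_ ?_ ?_ <;>
    (simp only [psi, Apoly, Bpoly, Cpoly, Pi.smul_apply, smul_eq_C_mul, Matrix.cons_val_zero,
      Matrix.cons_val_one, Matrix.head_cons, Matrix.cons_val_two, Matrix.cons_val_three,
      Matrix.tail_cons]; ring)

lemma psi_sub (p q r s p' q' r' s' : S) :
    psi (p - p') (q - q') (r - r') (s - s') = psi p q r s - psi p' q' r' s' := by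
  refine funext4 _ _ ?_ ?_ ?_ ?_ <;>
    (simp only [psi, Apoly, Bpoly, Cpoly, Pi.sub_apply, Matrix.cons_val_zero,
      Matrix.cons_val_one, Matrix.head_cons, Matrix.cons_val_two, Matrix.cons_val_three,
      Matrix.tail_cons]; ring)

noncomputable def Phi (k : ℕ) (hk : 2 ≤ k) :
    (Wspace k × Wspace (k - 2) × Wspace (k - 2) × Wspace (k - 2)) →ₗ[ℚ] homPart M' k where
  toFun t := ⟨psi t.1.1 t.2.1.1 t.2.2.1.1 t.2.2.2.1,
    Submodule.mem_inf.mpr ⟨psi_mem_M' _ _ _ _, Submodule.mem_pi.mpr fun i _ =>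
      (mem_homogeneousSubmodule _ _).mpr
        (psi_homog hk t.1.2 t.2.1.2 t.2.2.1.2 t.2.2.2.2 i)⟩⟩
  map_add' t u := Subtype.ext (by
    simp only [Submodule.coe_add, Prod.fst_add, Prod.snd_add]
    exact psi_add _ _ _ _ _ _ _ _)
  map_smul' c t := Subtype.ext (by
    simp only [Submodule.coe_smul, Prod.smul_fst, Prod.smul_snd, RingHom.id_apply]
    exact (psi_smul c _ _ _ _).symm ▸ rfl)

lemma Phi_injective (k : ℕ) (hk : 2 ≤ k) : Function.Injective (Phi k hk) := by
  intro t u h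
  have hval : psi t.1.1 t.2.1.1 t.2.2.1.1 t.2.2.2.1 = psi u.1.1 u.2.1.1 u.2.2.1.1 u.2.2.2.1 :=
    congrArg Subtype.val h
  have hz : psi (t.1.1 - u.1.1) (t.2.1.1 - u.2.1.1) (t.2.2.1.1 - u.2.2.1.1)
      (t.2.2.2.1 - u.2.2.2.1) = 0 := by
    rw [psi_sub, hval, sub_self]
  obtain ⟨e1, e2, e3, e4⟩ := psi_eq_zero hz
  have : t.1 = u.1 := Subtype.ext (by rwa [sub_eq_zero] at e1)
  have : t.2.1 = u.2.1 := Subtype.ext (by rwa [sub_eq_zero] at e2)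
  have : t.2.2.1 = u.2.2.1 := Subtype.ext (by rwa [sub_eq_zero] at e3)
  have : t.2.2.2 = u.2.2.2 := Subtype.ext (by rwa [sub_eq_zero] at e4)
  exact Prod.ext ‹t.1 = u.1› (Prod.ext ‹t.2.1 = u.2.1› (Prod.ext ‹t.2.2.1 = u.2.2.1›
    ‹t.2.2.2 = u.2.2.2›))

lemma Phi_surjective (k : ℕ) (hk : 2 ≤ k) : Function.Surjective (Phi k hk) := by
  rintro ⟨g, hg⟩
  obtain ⟨hgM, hgpi⟩ := Submodule.mem_inf.mp hg
  have hhom : ∀ i, (g i).IsHomogeneous k := fun i =>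
    (mem_homogeneousSubmodule _ _).mp (Submodule.mem_pi.mp hgpi i trivial)
  obtain ⟨p, q, r, s, hp, hq, hr, hs, heq⟩ := psi_param hk g hgM hhom
  exact ⟨(⟨p, hp⟩, ⟨q, hq⟩, ⟨r, hr⟩, ⟨s, hs⟩), Subtype.ext heq⟩

lemma choose_two (n : ℕ) : 2 * ((n + 2).choose 2) = (n + 2) * (n + 1) := by
  induction n with
  | zero => decide
  | succ n ih =>
    rw [show n + 1 + 2 = (n + 2) + 1 by omega, Nat.choose_succ_succ (n + 2) 1,
      Nat.choose_one_right, Nat.mul_add, ih]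
    ring

lemma finrank_homPart_M' (k : ℕ) (hk : 2 ≤ k) :
    Module.finrank ℚ (homPart M' k) = 2 * k ^ 2 + 1 := by
  have e := LinearEquiv.ofBijective (Phi k hk) ⟨Phi_injective k hk, Phi_surjective k hk⟩
  rw [← e.finrank_eq, Module.finrank_prod, Module.finrank_prod, Module.finrank_prod,
    finrank_W, finrank_W]
  obtain ⟨m, rfl⟩ : ∃ m, k = m + 2 := ⟨k - 2, by omega⟩
  rw [show m + 2 - 2 = m by omega]
  have e1 := choose_two (m + 2)
  have e2 := choose_two m
  refine Nat.eq_of_mul_eq_mul_left (show 0 < 2 by norm_num) ?_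
  calc 2 * ((m + 2 + 2).choose 2 + ((m + 2).choose 2 + ((m + 2).choose 2 + (m + 2).choose 2)))
      = 2 * ((m + 2 + 2).choose 2) + 3 * (2 * ((m + 2).choose 2)) := by ring
    _ = (m + 2 + 2) * (m + 2 + 1) + 3 * ((m + 2) * (m + 1)) := by rw [e1, e2]
    _ = 2 * (2 * (m + 2) ^ 2 + 1) := by ring

/-- The spline module `M = C^0(Σ)` of the combinatorially equivalent symmetric fan `Σ`
(with the three connecting lines concurrent), whose Hilbert polynomial is `2k² + 2`. -/
noncomputable def M : Submodule S (Fin 4 → S) :=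
  splineBR [(X 0 + X 1 - X 2, 0, 1), (2 * X 0 - X 1 + X 2, 0, 2),
    (X 0 - 2 * X 1 - X 2, 0, 3), (X 0, 1, 2), (X 0 - X 1, 2, 3), (X 1, 1, 3)]

noncomputable def m2 : S := 2 * X 0 - X 1 + X 2
noncomputable def m3 : S := X 0 - 2 * X 1 - X 2

lemma mem_M_iff (g : Fin 4 → S) :
    g ∈ M ↔ (l1 ∣ g 0 - g 1) ∧ (m2 ∣ g 0 - g 2) ∧ (m3 ∣ g 0 - g 3) ∧
      (X 0 ∣ g 1 - g 2) ∧ (X 0 - X 1 ∣ g 2 - g 3) ∧ (X 1 ∣ g 1 - g 3) := by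
  rw [M, mem_splineBR]
  constructor
  · intro h
    exact ⟨h (X 0 + X 1 - X 2, 0, 1) (by simp), h (2 * X 0 - X 1 + X 2, 0, 2) (by simp),
      h (X 0 - 2 * X 1 - X 2, 0, 3) (by simp), h (X 0, 1, 2) (by simp),
      h (X 0 - X 1, 2, 3) (by simp), h (X 1, 1, 3) (by simp)⟩
  · rintro ⟨h1, h2, h3, h4, h5, h6⟩ c hc
    simp only [List.mem_cons, List.not_mem_nil, or_false] at hc
    rcases hc with rfl | rfl | rfl | rfl | rfl | rfl
    exacts [h1, h2, h3, h4, h5, h6]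

lemma m2_ne : m2 ≠ 0 := ne_zero_of_eval ![1, 0, 0] (by simp [m2])
lemma m3_ne : m3 ≠ 0 := ne_zero_of_eval ![1, 0, 0] (by simp [m3])
lemma X01_ne : (X 0 - X 1 : S) ≠ 0 := ne_zero_of_eval ![1, 0, 0] (by simp)

lemma hm2 : m2.IsHomogeneous 1 := by
  have h := hlin 2 (-1) 1
  have e : (C (2:ℚ)) * X 0 + (C (-1:ℚ)) * X 1 + (C (1:ℚ)) * X 2 = m2 := by
    simp only [map_one, map_neg, map_ofNat]; unfold m2; ring
  rwa [e] at h

lemma hm3 : m3.IsHomogeneous 1 := by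
  have h := hlin 1 (-2) (-1)
  have e : (C (1:ℚ)) * X 0 + (C (-2:ℚ)) * X 1 + (C (-1:ℚ)) * X 2 = m3 := by
    simp only [map_one, map_neg, map_ofNat]; unfold m3; ring
  rwa [e] at h

noncomputable def theta (p q r s : S) : Fin 4 → S :=
  ![p, p + q * l1, p - q * m2 + r * (m2 * X 0) + s * (m2 * (X 0 * X 2)),
    p + q * m3 - r * (m3 * X 1) + s * (m3 * (X 1 * (X 0 - X 1 - X 2)))]

lemma theta_mem_M (p q r s : S) : theta p q r s ∈ M := by
  rw [mem_M_iff]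
  refine ⟨⟨-q, ?_⟩, ⟨q - r * X 0 - s * (X 0 * X 2), ?_⟩,
    ⟨-q + r * X 1 - s * (X 1 * (X 0 - X 1 - X 2)), ?_⟩,
    ⟨3 * q - r * m2 - s * (m2 * X 2), ?_⟩,
    ⟨-3 * q + r * (2 * X 0 + 2 * X 1 + X 2) +
      s * (2 * X 1 ^ 2 - X 0 * X 1 + 2 * X 0 * X 2 + 3 * X 1 * X 2 + X 2 ^ 2), ?_⟩,
    ⟨3 * q + r * m3 - s * (m3 * (X 0 - X 1 - X 2)), ?_⟩⟩ <;>
  · simp only [theta, l1, m2, m3, Matrix.cons_val_zero, Matrix.cons_val_one, Matrix.head_cons,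
      Matrix.cons_val_two, Matrix.cons_val_three, Matrix.tail_cons]
    ring

lemma theta_homog {k : ℕ} (hk : 3 ≤ k) {p q r s : S} (hp : p.IsHomogeneous k)
    (hq : q.IsHomogeneous (k - 1)) (hr : r.IsHomogeneous (k - 2))
    (hs : s.IsHomogeneous (k - 3)) : ∀ i, (theta p q r s i).IsHomogeneous k := by
  have h1 : (q * l1).IsHomogeneous k := homog_cast (hq.mul hl1) (by omega)
  have h2 : (q * m2).IsHomogeneous k := homog_cast (hq.mul hm2) (by omega)
  have h3 : (q * m3).IsHomogeneous k := homog_cast (hq.mul hm3) (by omega)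
  have h4 : (r * (m2 * X 0)).IsHomogeneous k :=
    homog_cast (hr.mul (hm2.mul (isHomogeneous_X ℚ 0))) (by omega)
  have h5 : (r * (m3 * X 1)).IsHomogeneous k :=
    homog_cast (hr.mul (hm3.mul (isHomogeneous_X ℚ 1))) (by omega)
  have h6 : (s * (m2 * (X 0 * X 2))).IsHomogeneous k :=
    homog_cast (hs.mul (hm2.mul ((isHomogeneous_X ℚ 0).mul (isHomogeneous_X ℚ 2)))) (by omega)
  have h7 : (s * (m3 * (X 1 * (X 0 - X 1 - X 2)))).IsHomogeneous k := by
    have hx : (X 0 - X 1 - X 2 : S).IsHomogeneous 1 :=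
      ((isHomogeneous_X ℚ 0).sub (isHomogeneous_X ℚ 1)).sub (isHomogeneous_X ℚ 2)
    exact homog_cast (hs.mul (hm3.mul ((isHomogeneous_X ℚ 1).mul hx))) (by omega)
  intro i
  fin_cases i <;> simp only [theta, Matrix.cons_val_zero, Matrix.cons_val_one, Matrix.head_cons,
    Matrix.cons_val_two, Matrix.cons_val_three, Matrix.tail_cons]
  · exact hp
  · exact hp.add h1
  · exact ((hp.sub h2).add h4).add h6
  · exact ((hp.add h3).sub h5).add h7

lemma theta_eq_zero {p q r s : S} (h : theta p q r s = 0) :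
    p = 0 ∧ q = 0 ∧ r = 0 ∧ s = 0 := by
  have e0 : p = 0 := by simpa [theta] using congrFun h 0
  have e1 : q * l1 = 0 := by
    have := congrFun h 1; simp [theta, e0] at this; simpa using this
  have hq : q = 0 := by
    rcases mul_eq_zero.mp e1 with h' | h'; exacts [h', absurd h' l1_ne]
  have e2 : (m2 * X 0) * (r + s * X 2) = 0 := by
    have := congrFun h 2
    simp [theta, e0, hq] at this
    simp only [m2] at this ⊢
    linear_combination this
  have e3 : (m3 * X 1) * (-r + s * (X 0 - X 1 - X 2)) = 0 := by
    have := congrFun h 3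
    simp [theta, e0, hq] at this
    simp only [m3] at this ⊢
    linear_combination this
  have hm2X0 : (m2 * X 0 : S) ≠ 0 := mul_ne_zero m2_ne X0_ne
  have hm3X1 : (m3 * X 1 : S) ≠ 0 := mul_ne_zero m3_ne X1_ne
  have f2 : r + s * X 2 = 0 := by
    rcases mul_eq_zero.mp e2 with h' | h'; exacts [absurd h' hm2X0, h']
  have f3 : -r + s * (X 0 - X 1 - X 2) = 0 := by
    rcases mul_eq_zero.mp e3 with h' | h'; exacts [absurd h' hm3X1, h']
  have f4 : (X 0 - X 1 : S) * s = 0 := by linear_combination f2 + f3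
  have hs : s = 0 := by
    rcases mul_eq_zero.mp f4 with h' | h'; exacts [absurd h' X01_ne, h']
  have hr : r = 0 := by rw [hs] at f2; simpa using f2
  exact ⟨e0, hq, hr, hs⟩

lemma theta_add (p q r s p' q' r' s' : S) :
    theta (p + p') (q + q') (r + r') (s + s') = theta p q r s + theta p' q' r' s' := by
  refine funext4 _ _ ?_ ?_ ?_ ?_ <;>
    (simp only [theta, Pi.add_apply, Matrix.cons_val_zero, Matrix.cons_val_one, Matrix.head_cons,
      Matrix.cons_val_two, Matrix.cons_val_three, Matrix.tail_cons]; try ring)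

lemma theta_smul (c : ℚ) (p q r s : S) :
    theta (c • p) (c • q) (c • r) (c • s) = c • theta p q r s := by
  refine funext4 _ _ ?_ ?_ ?_ ?_ <;>
    (simp only [theta, Pi.smul_apply, smul_eq_C_mul, Matrix.cons_val_zero, Matrix.cons_val_one,
      Matrix.head_cons, Matrix.cons_val_two, Matrix.cons_val_three, Matrix.tail_cons]; try ring)

lemma theta_sub (p q r s p' q' r' s' : S) :
    theta (p - p') (q - q') (r - r') (s - s') = theta p q r s - theta p' q' r' s' := by
  refine funext4 _ _ ?_ ?_ ?_ ?_ <;>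
    (simp only [theta, Pi.sub_apply, Matrix.cons_val_zero, Matrix.cons_val_one, Matrix.head_cons,
      Matrix.cons_val_two, Matrix.cons_val_three, Matrix.tail_cons]; try ring)

noncomputable def Theta (k : ℕ) (hk : 3 ≤ k) :
    (Wspace k × Wspace (k - 1) × Wspace (k - 2) × Wspace (k - 3)) →ₗ[ℚ] homPart M k where
  toFun t := ⟨theta t.1.1 t.2.1.1 t.2.2.1.1 t.2.2.2.1,
    Submodule.mem_inf.mpr ⟨theta_mem_M _ _ _ _, Submodule.mem_pi.mpr fun i _ =>
      (mem_homogeneousSubmodule _ _).mpr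
        (theta_homog hk t.1.2 t.2.1.2 t.2.2.1.2 t.2.2.2.2 i)⟩⟩
  map_add' t u := Subtype.ext (by
    simp only [Submodule.coe_add, Prod.fst_add, Prod.snd_add]
    exact theta_add _ _ _ _ _ _ _ _)
  map_smul' c t := Subtype.ext (by
    simp only [Submodule.coe_smul, Prod.smul_fst, Prod.smul_snd, RingHom.id_apply]
    exact (theta_smul c _ _ _ _).symm ▸ rfl)

lemma Theta_injective (k : ℕ) (hk : 3 ≤ k) : Function.Injective (Theta k hk) := by
  intro t u h
  have hval : theta t.1.1 t.2.1.1 t.2.2.1.1 t.2.2.2.1 = theta u.1.1 u.2.1.1 u.2.2.1.1 u.2.2.2.1 :=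
    congrArg Subtype.val h
  have hz : theta (t.1.1 - u.1.1) (t.2.1.1 - u.2.1.1) (t.2.2.1.1 - u.2.2.1.1)
      (t.2.2.2.1 - u.2.2.2.1) = 0 := by
    rw [theta_sub, hval, sub_self]
  obtain ⟨e1, e2, e3, e4⟩ := theta_eq_zero hz
  have : t.1 = u.1 := Subtype.ext (by rwa [sub_eq_zero] at e1)
  have : t.2.1 = u.2.1 := Subtype.ext (by rwa [sub_eq_zero] at e2)
  have : t.2.2.1 = u.2.2.1 := Subtype.ext (by rwa [sub_eq_zero] at e3)
  have : t.2.2.2 = u.2.2.2 := Subtype.ext (by rwa [sub_eq_zero] at e4)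
  exact Prod.ext ‹t.1 = u.1› (Prod.ext ‹t.2.1 = u.2.1› (Prod.ext ‹t.2.2.1 = u.2.2.1›
    ‹t.2.2.2 = u.2.2.2›))

noncomputable def compMap (P : Submodule S (Fin 4 → S)) (k : ℕ) :
    homPart P k →ₗ[ℚ] (Fin 4 → Wspace k) where
  toFun v := fun i => ⟨v.1 i, Submodule.mem_pi.mp (Submodule.mem_inf.mp v.2).2 i trivial⟩
  map_add' v w := by funext i; exact Subtype.ext rfl
  map_smul' c v := by funext i; exact Subtype.ext rfl

instance homPart_fd (P : Submodule S (Fin 4 → S)) (k : ℕ) :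
    FiniteDimensional ℚ (homPart P k) :=
  FiniteDimensional.of_injective (compMap P k)
    (fun a b h => Subtype.ext (funext fun i => congrArg Subtype.val (congrFun h i)))

lemma finrank_homPart_M_ge (k : ℕ) (hk : 3 ≤ k) :
    2 * k ^ 2 + 2 ≤ Module.finrank ℚ (homPart M k) := by
  have hle := LinearMap.finrank_le_finrank_of_injective (Theta_injective k hk)
  rw [Module.finrank_prod, Module.finrank_prod, Module.finrank_prod,
    finrank_W, finrank_W, finrank_W, finrank_W] at hle
  refine le_trans (le_of_eq ?_) hle
  obtain ⟨m, rfl⟩ : ∃ m, k = m + 3 := ⟨k - 3, by omega⟩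
  rw [show m + 3 - 1 = m + 2 by omega, show m + 3 - 2 = m + 1 by omega,
    show m + 3 - 3 = m by omega]
  have e1 := choose_two (m + 3)
  have e2 := choose_two (m + 2)
  have e3 := choose_two (m + 1)
  have e4 := choose_two m
  refine Nat.eq_of_mul_eq_mul_left (show 0 < 2 by norm_num) ?_
  calc 2 * (2 * (m + 3) ^ 2 + 2)
      = (m + 3 + 2) * (m + 3 + 1) + ((m + 2 + 2) * (m + 2 + 1) +
        ((m + 1 + 2) * (m + 1 + 1) + (m + 2) * (m + 1))) := by ring
    _ = 2 * ((m + 3 + 2).choose 2) + (2 * ((m + 2 + 2).choose 2) +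
        (2 * ((m + 1 + 2).choose 2) + 2 * ((m + 2).choose 2))) := by rw [e1, e2, e3, e4]
    _ = 2 * ((m + 3 + 2).choose 2 + ((m + 2 + 2).choose 2 +
        ((m + 1 + 2).choose 2 + (m + 2).choose 2))) := by ring

lemma smul_subtype (P : Submodule S (Fin 4 → S)) (c : ℚ) (g : Fin 4 → S) (h : g ∈ P)
    (h' : c • g ∈ P) : (⟨c • g, h'⟩ : P) = (C c : S) • (⟨g, h⟩ : P) :=
  Subtype.ext (by
    funext i
    show (c • g) i = ((C c : S) • g) i
    simp only [Pi.smul_apply, smul_eq_C_mul, smul_eq_mul])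

lemma homPart_memP {P : Submodule S (Fin 4 → S)} {k : ℕ} (v : homPart P k) : v.1 ∈ P :=
  (Submodule.mem_inf.mp v.2).1

lemma homPart_hom {P : Submodule S (Fin 4 → S)} {k : ℕ} (v : homPart P k) :
    ∀ j, (v.1 j).IsHomogeneous k := fun j =>
  (mem_homogeneousSubmodule _ _).mp
    (Submodule.mem_pi.mp (Submodule.mem_inf.mp v.2).2 j trivial)

noncomputable def transportEquiv (e : M' ≃ₗ[S] M)
    (h1 : ∀ (k : ℕ) (v : M'), (∀ j, ((v : Fin 4 → S) j).IsHomogeneous k) →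
      ∀ j, ((e v : Fin 4 → S) j).IsHomogeneous k)
    (h2 : ∀ (k : ℕ) (w : M), (∀ j, ((w : Fin 4 → S) j).IsHomogeneous k) →
      ∀ j, ((e.symm w : Fin 4 → S) j).IsHomogeneous k)
    (k : ℕ) : homPart M' k ≃ₗ[ℚ] homPart M k where
  toFun v := ⟨(e ⟨v.1, homPart_memP v⟩ : Fin 4 → S),
    Submodule.mem_inf.mpr ⟨(e ⟨v.1, homPart_memP v⟩).2, Submodule.mem_pi.mpr fun j _ =>
      (mem_homogeneousSubmodule _ _).mpr (h1 k ⟨v.1, homPart_memP v⟩ (homPart_hom v) j)⟩⟩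
  invFun w := ⟨(e.symm ⟨w.1, homPart_memP w⟩ : Fin 4 → S),
    Submodule.mem_inf.mpr ⟨(e.symm ⟨w.1, homPart_memP w⟩).2, Submodule.mem_pi.mpr fun j _ =>
      (mem_homogeneousSubmodule _ _).mpr (h2 k ⟨w.1, homPart_memP w⟩ (homPart_hom w) j)⟩⟩
  map_add' v w := Subtype.ext (by
    show (e ⟨(v + w).1, _⟩ : Fin 4 → S) = (e ⟨v.1, _⟩ : Fin 4 → S) + (e ⟨w.1, _⟩ : Fin 4 → S)
    have : (⟨(v + w).1, homPart_memP (v + w)⟩ : M') =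
        ⟨v.1, homPart_memP v⟩ + ⟨w.1, homPart_memP w⟩ := Subtype.ext rfl
    rw [this, map_add]
    rfl)
  map_smul' c v := Subtype.ext (by
    show (e ⟨(c • v).1, _⟩ : Fin 4 → S) = c • (e ⟨v.1, _⟩ : Fin 4 → S)
    have h' : (⟨(c • v).1, homPart_memP (c • v)⟩ : M') =
        (C c : S) • ⟨v.1, homPart_memP v⟩ := smul_subtype _ c v.1 _ _
    rw [h', map_smul]
    funext i
    show ((C c : S) • (e ⟨v.1, homPart_memP v⟩ : Fin 4 → S)) i =
      (c • (e ⟨v.1, homPart_memP v⟩ : Fin 4 → S)) i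
    simp only [Pi.smul_apply, smul_eq_C_mul, smul_eq_mul])
  left_inv v := Subtype.ext (by
    show (e.symm ⟨(e ⟨v.1, homPart_memP v⟩ : Fin 4 → S), _⟩ : Fin 4 → S) = v.1
    have : (⟨(e ⟨v.1, homPart_memP v⟩ : Fin 4 → S), _⟩ : M) = e ⟨v.1, homPart_memP v⟩ :=
      Subtype.ext rfl
    rw [this, e.symm_apply_apply])
  right_inv w := Subtype.ext (by
    show (e ⟨(e.symm ⟨w.1, homPart_memP w⟩ : Fin 4 → S), _⟩ : Fin 4 → S) = w.1
    have : (⟨(e.symm ⟨w.1, homPart_memP w⟩ : Fin 4 → S), _⟩ : M') = e.symm ⟨w.1, homPart_memP w⟩ :=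
      Subtype.ext rfl
    rw [this, e.apply_symm_apply])

/-- **Theorem**: the Hilbert polynomial of `M′ = C^0(Σ′)` is `2k² + 1`; in particular
there is no degree-preserving `S`-module isomorphism between `M′` and the spline module
`M` of the combinatorially equivalent symmetric fan (whose Hilbert polynomial is
`2k² + 2`): the Hilbert polynomial of `C^0(Σ)` depends on the geometry, not just the
combinatorics, of `Σ`. -/
theorem hilbert_polynomial_perturbed_fan :
    (∃ K : ℕ, ∀ k : ℕ, K ≤ k →
      Module.finrank ℚ (homPart M' k) = 2 * k ^ 2 + 1) ∧
    ¬ ∃ e : M' ≃ₗ[S] M,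
        (∀ (k : ℕ) (v : M'), (∀ j, ((v : Fin 4 → S) j).IsHomogeneous k) →
          ∀ j, ((e v : Fin 4 → S) j).IsHomogeneous k) ∧
        (∀ (k : ℕ) (w : M), (∀ j, ((w : Fin 4 → S) j).IsHomogeneous k) →
          ∀ j, ((e.symm w : Fin 4 → S) j).IsHomogeneous k) := by
  constructor
  · exact ⟨2, fun k hk => finrank_homPart_M' k hk⟩
  · rintro ⟨e, he1, he2⟩
    have h19 : Module.finrank ℚ (homPart M' 3) = 19 := by
      simpa using finrank_homPart_M' 3 (by norm_num)
    have heq := (transportEquiv e he1 he2 3).finrank_eq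
    have hge := finrank_homPart_M_ge 3 (le_refl 3)
    omega
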